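/- Let (Z_t)_{t ∈ ℤ} be a stationary 𝒵-valued process with β-mixing coefficients β(k), let a, μ ≥ 1 be integers with n = 2aμ, let M > 0, let B and p be positive integers, and let ℱ be a finite set of measurable functions from 𝒵 to [0, M] with cardinality at most 2^{Bp}. Let δ ∈ (0,1) be such that δ' = δ − 2(μ − 1)β(a) > 0. Then with probability at least 1 − δ, simultaneously for all ℓ_f ∈ ℱ: E[ℓ_f(Z_1)] ≤ (1/n) Σ_{t=1}^n ℓ_f(Z_t) + M·√( 2((Bp + 1)·ln 2 + ln(1/δ')) / μ ). -/

import Mathlib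

open MeasureTheory ProbabilityTheory

/-- Total variation distance between two measures. -/
noncomputable def tvDist {α : Type*} [MeasurableSpace α] (μ ν : Measure α) : ℝ :=
  ⨆ A : {A : Set α // MeasurableSet A}, |(μ A).toReal - (ν A).toReal|

/-- β-mixing coefficient of the process `Z` under `P`: the supremum over `t` of the
total variation distance between the joint law of `((Z s)_{s ≤ t}, (Z s)_{s ≥ t+k})`
and the product of the marginal laws. -/

noncomputable def betaMix {Ω 𝒵 : Type*} [MeasurableSpace Ω] [MeasurableSpace 𝒵]
    (P : Measure Ω) (Z : ℤ → Ω → 𝒵) (k : ℕ) : ℝ :=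
  ⨆ t : ℤ, tvDist
    (P.map (fun ω => (fun s : {s : ℤ // s ≤ t} => Z s ω,
                      fun s : {s : ℤ // t + k ≤ s} => Z s ω)))
    ((P.map (fun ω => fun s : {s : ℤ // s ≤ t} => Z s ω)).prod
      (P.map (fun ω => fun s : {s : ℤ // t + k ≤ s} => Z s ω)))

/-- Stationarity of the process `Z` under `P`. -/
def Stationary {Ω 𝒵 : Type*} [MeasurableSpace Ω] [MeasurableSpace 𝒵]
    (P : Measure Ω) (Z : ℤ → Ω → 𝒵) : Prop :=
  ∀ s : ℤ, P.map (fun ω => fun t : ℤ => Z (t + s) ω) = P.map (fun ω => fun t : ℤ => Z t ω)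

section TV

variable {α : Type*} [MeasurableSpace α]

lemma measure_toReal_le_one (μ : Measure α) [IsProbabilityMeasure μ] (A : Set α) :
    (μ A).toReal ≤ 1 := by
  have h : μ A ≤ 1 := prob_le_one
  have := ENNReal.toReal_mono (by simp) h
  simpa using this

lemma abs_diff_le_one (μ ν : Measure α) [IsProbabilityMeasure μ] [IsProbabilityMeasure ν]
    (A : Set α) : |(μ A).toReal - (ν A).toReal| ≤ 1 := by
  have h1 := measure_toReal_le_one μ A
  have h2 := measure_toReal_le_one ν A
  have h3 : (0:ℝ) ≤ (μ A).toReal := ENNReal.toReal_nonneg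
  have h4 : (0:ℝ) ≤ (ν A).toReal := ENNReal.toReal_nonneg
  rw [abs_sub_le_iff]; constructor <;> linarith

lemma abs_sub_le_tvDist (μ ν : Measure α) [IsProbabilityMeasure μ] [IsProbabilityMeasure ν]
    {A : Set α} (hA : MeasurableSet A) :
    |(μ A).toReal - (ν A).toReal| ≤ tvDist μ ν := by
  have hbdd : BddAbove (Set.range fun A : {A : Set α // MeasurableSet A} =>
      |(μ (A : Set α)).toReal - (ν (A : Set α)).toReal|) := by
    refine ⟨1, ?_⟩
    rintro x ⟨B, rfl⟩
    exact abs_diff_le_one μ ν B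
  exact le_ciSup hbdd ⟨A, hA⟩

lemma tvDist_nonneg (μ ν : Measure α) [IsProbabilityMeasure μ] [IsProbabilityMeasure ν] :
    0 ≤ tvDist μ ν :=
  le_trans (abs_nonneg _) (abs_sub_le_tvDist μ ν MeasurableSet.empty)

lemma tvDist_le_one (μ ν : Measure α) [IsProbabilityMeasure μ] [IsProbabilityMeasure ν] :
    tvDist μ ν ≤ 1 := by
  have : Nonempty {A : Set α // MeasurableSet A} := ⟨⟨∅, MeasurableSet.empty⟩⟩
  exact ciSup_le fun A => abs_diff_le_one μ ν A

end TV

section Beta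

variable {Ω 𝒵 : Type*} [MeasurableSpace Ω] [MeasurableSpace 𝒵]
  (P : Measure Ω) [IsProbabilityMeasure P] (Z : ℤ → Ω → 𝒵)

lemma measurable_past (hZmeas : ∀ t, Measurable (Z t)) (t : ℤ) :
    Measurable (fun ω => fun s : {s : ℤ // s ≤ t} => Z s ω) :=
  measurable_pi_lambda _ fun s => hZmeas s

lemma measurable_future (hZmeas : ∀ t, Measurable (Z t)) (t : ℤ) (k : ℕ) :
    Measurable (fun ω => fun s : {s : ℤ // t + k ≤ s} => Z s ω) :=
  measurable_pi_lambda _ fun s => hZmeas s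

lemma tvDist_le_betaMix (hZmeas : ∀ t, Measurable (Z t)) (k : ℕ) (t : ℤ) :
    tvDist
      (P.map (fun ω => (fun s : {s : ℤ // s ≤ t} => Z s ω,
                        fun s : {s : ℤ // t + k ≤ s} => Z s ω)))
      ((P.map (fun ω => fun s : {s : ℤ // s ≤ t} => Z s ω)).prod
        (P.map (fun ω => fun s : {s : ℤ // t + k ≤ s} => Z s ω)))
      ≤ betaMix P Z k := by
  have hbdd : BddAbove (Set.range fun t : ℤ => tvDist
      (P.map (fun ω => (fun s : {s : ℤ // s ≤ t} => Z s ω,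
                        fun s : {s : ℤ // t + k ≤ s} => Z s ω)))
      ((P.map (fun ω => fun s : {s : ℤ // s ≤ t} => Z s ω)).prod
        (P.map (fun ω => fun s : {s : ℤ // t + k ≤ s} => Z s ω)))) := by
    refine ⟨1, ?_⟩
    rintro x ⟨u, rfl⟩
    haveI : IsProbabilityMeasure (P.map (fun ω => (fun s : {s : ℤ // s ≤ u} => Z s ω,
        fun s : {s : ℤ // u + k ≤ s} => Z s ω))) :=
      Measure.isProbabilityMeasure_map (((measurable_past Z hZmeas u).prodMk
        (measurable_future Z hZmeas u k)).aemeasurable)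
    haveI : IsProbabilityMeasure (P.map (fun ω => fun s : {s : ℤ // s ≤ u} => Z s ω)) :=
      Measure.isProbabilityMeasure_map ((measurable_past Z hZmeas u).aemeasurable)
    haveI : IsProbabilityMeasure (P.map (fun ω => fun s : {s : ℤ // u + k ≤ s} => Z s ω)) :=
      Measure.isProbabilityMeasure_map ((measurable_future Z hZmeas u k).aemeasurable)
    exact tvDist_le_one _ _
  exact le_ciSup hbdd t

lemma betaMix_nonneg (hZmeas : ∀ t, Measurable (Z t)) (k : ℕ) : 0 ≤ betaMix P Z k := by
  refine le_trans ?_ (tvDist_le_betaMix P Z hZmeas k 0)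
  haveI : IsProbabilityMeasure (P.map (fun ω => (fun s : {s : ℤ // s ≤ (0:ℤ)} => Z s ω,
      fun s : {s : ℤ // (0:ℤ) + k ≤ s} => Z s ω))) :=
    Measure.isProbabilityMeasure_map (((measurable_past Z hZmeas 0).prodMk
      (measurable_future Z hZmeas 0 k)).aemeasurable)
  haveI : IsProbabilityMeasure (P.map (fun ω => fun s : {s : ℤ // s ≤ (0:ℤ)} => Z s ω)) :=
    Measure.isProbabilityMeasure_map ((measurable_past Z hZmeas 0).aemeasurable)
  haveI : IsProbabilityMeasure (P.map (fun ω => fun s : {s : ℤ // (0:ℤ) + k ≤ s} => Z s ω)) :=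
    Measure.isProbabilityMeasure_map ((measurable_future Z hZmeas 0 k).aemeasurable)
  exact tvDist_nonneg _ _

end Beta

section Chernoff

open Real

lemma exp_le_cosh_add {y M t : ℝ} (hM : 0 < M) (hy : |y| ≤ M) :
    Real.exp (t * y) ≤ Real.cosh (t * M) + y * (Real.sinh (t * M) / M) := by
  obtain ⟨hy1, hy2⟩ := abs_le.mp hy
  have hMne : M ≠ 0 := ne_of_gt hM
  have hsplit : t * y = ((M + y) / (2 * M)) * (t * M) + ((M - y) / (2 * M)) * (-(t * M)) := by
    field_simp
    ring
  have hconv := convexOn_exp.2 (Set.mem_univ (t * M)) (Set.mem_univ (-(t * M)))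
    (show (0:ℝ) ≤ (M + y) / (2 * M) from div_nonneg (by linarith) (by linarith))
    (show (0:ℝ) ≤ (M - y) / (2 * M) from div_nonneg (by linarith) (by linarith))
    (show (M + y) / (2 * M) + (M - y) / (2 * M) = 1 by field_simp; ring)
  simp only [smul_eq_mul] at hconv
  rw [hsplit]
  refine le_trans hconv (le_of_eq ?_)
  rw [Real.cosh_eq, Real.sinh_eq]
  field_simp
  ring

variable {T : Type*} [MeasurableSpace T]

lemma integrable_of_bdd {μ : Measure T} [IsFiniteMeasure μ] {f : T → ℝ} {C : ℝ}
    (hf : Measurable f) (h : ∀ x, |f x| ≤ C) : Integrable f μ :=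
  ⟨hf.aestronglyMeasurable, HasFiniteIntegral.of_bounded (C := C) (ae_of_all _ h)⟩

lemma chernoff_block (ρ : Measure T) [IsProbabilityMeasure ρ]
    (m : ℕ) (hm : 0 < m) (g : T → ℝ) (hg : Measurable g) (M : ℝ) (hM : 0 < M)
    (hbdd : ∀ x, g x ∈ Set.Icc (0:ℝ) M) (ε : ℝ) (hε : 0 ≤ ε) :
    ((Measure.pi fun _ : Fin m => ρ)
        {x | (m : ℝ) * ε ≤ ∑ i, ((∫ y, g y ∂ρ) - g (x i))}).toReal
      ≤ Real.exp (-(m : ℝ) * ε ^ 2 / (2 * M ^ 2)) := by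
  classical
  letI : MeasureSpace T := { volume := ρ }
  haveI : IsProbabilityMeasure (volume : Measure T) := ‹IsProbabilityMeasure ρ›
  set mg : ℝ := ∫ y, g y ∂ρ with hmg
  have hgint : Integrable g ρ := integrable_of_bdd (C := M) hg
    (fun x => by rcases hbdd x with ⟨h1, h2⟩; rw [abs_le]; exact ⟨by linarith, h2⟩)
  have hmg0 : 0 ≤ mg := integral_nonneg fun x => (hbdd x).1
  have hmgM : mg ≤ M := by
    have := integral_mono hgint (integrable_const M) (fun x => (hbdd x).2)
    simpa using this
  set Y : T → ℝ := fun y => mg - g y with hY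
  have hYmeas : Measurable Y := measurable_const.sub hg
  have hYbdd : ∀ y, |Y y| ≤ M := by
    intro y
    rcases hbdd y with ⟨h1, h2⟩
    rw [abs_le]; constructor <;> simp [hY] <;> linarith
  have hYint : ∫ y, Y y ∂ρ = 0 := by
    rw [integral_sub (integrable_const mg) hgint]
    simp [hmg]
  set t : ℝ := ε / M ^ 2 with ht
  have htpos : 0 ≤ t := div_nonneg hε (by positivity)
  -- the random variable on the product space
  set X : (Fin m → T) → ℝ := fun x => ∑ i, Y (x i) with hX
  have hXmeas : Measurable X :=
    Finset.measurable_sum _ (fun i _ => hYmeas.comp (measurable_pi_apply i))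
  have hXbdd : ∀ x, |X x| ≤ (m : ℝ) * M := by
    intro x
    calc |X x| ≤ ∑ i, |Y (x i)| := Finset.abs_sum_le_sum_abs _ _
    _ ≤ ∑ _i : Fin m, M := Finset.sum_le_sum fun i _ => hYbdd _
    _ = (m : ℝ) * M := by simp [mul_comm]
  have hint : Integrable (fun x => Real.exp (t * X x)) (volume : Measure (Fin m → T)) := by
    refine integrable_of_bdd (by fun_prop) (C := Real.exp (t * ((m:ℝ) * M))) fun x => ?_
    rw [abs_of_pos (Real.exp_pos _)]
    exact Real.exp_le_exp.2 (mul_le_mul_of_nonneg_left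
      (le_trans (le_abs_self _) (hXbdd x)) htpos)
  have hvol : (Measure.pi fun _ : Fin m => ρ) = (volume : Measure (Fin m → T)) := rfl
  have hset : {x : Fin m → T | (m : ℝ) * ε ≤ ∑ i, (mg - g (x i))}
      = {x | (m : ℝ) * ε ≤ X x} := rfl
  rw [hvol, hset]
  have hcher := measure_ge_le_exp_mul_mgf (μ := (volume : Measure (Fin m → T))) (X := X)
    ((m : ℝ) * ε) htpos hint
  refine le_trans hcher ?_
  -- bound the mgf
  have hone : ∫ y, Real.exp (t * Y y) ∂ρ ≤ Real.cosh (t * M) := by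
    have hlhsint : Integrable (fun y => Real.exp (t * Y y)) ρ := by
      refine integrable_of_bdd (by fun_prop) (C := Real.exp (t * M)) fun y => ?_
      rw [abs_of_pos (Real.exp_pos _)]
      exact Real.exp_le_exp.2 (mul_le_mul_of_nonneg_left (le_trans (le_abs_self _) (hYbdd y)) htpos)
    have hrhsint : Integrable (fun y => Real.cosh (t * M) + Y y * (Real.sinh (t * M) / M)) ρ := by
      refine (integrable_const _).add ?_
      exact (integrable_of_bdd (C := M) hYmeas hYbdd).mul_const _
    have := integral_mono hlhsint hrhsint (fun y => exp_le_cosh_add hM (hYbdd y))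
    rw [integral_add (integrable_const _) ((integrable_of_bdd (C := M) hYmeas hYbdd).mul_const _),
      integral_const, integral_mul_const, hYint] at this
    simpa using this
  have hmgf : mgf X (volume : Measure (Fin m → T)) t
      ≤ Real.exp ((m : ℝ) * ((t * M) ^ 2 / 2)) := by
    have hexp : ∀ x : Fin m → T, Real.exp (t * X x) = ∏ i, Real.exp (t * Y (x i)) := by
      intro x
      rw [hX, Finset.mul_sum, Real.exp_sum]
    have : mgf X (volume : Measure (Fin m → T)) t
        = (∫ y, Real.exp (t * Y y)) ^ m := by
      rw [mgf]
      simp_rw [hexp]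
      rw [← hvol, MeasureTheory.integral_fintype_prod_eq_pow (ι := Fin m) (fun y => Real.exp (t * Y y)) (μ := ρ)]
      simp
      rfl
    rw [this]
    calc (∫ y, Real.exp (t * Y y)) ^ m ≤ (Real.cosh (t * M)) ^ m := by
          apply pow_le_pow_left₀ (integral_nonneg fun y => (Real.exp_pos _).le)
          exact hone
    _ ≤ (Real.exp ((t * M) ^ 2 / 2)) ^ m := by
          apply pow_le_pow_left₀ (Real.cosh_pos _).le
          exact Real.cosh_le_exp_half_sq _
    _ = Real.exp ((m : ℝ) * ((t * M) ^ 2 / 2)) := by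
          rw [← Real.exp_nat_mul]
  calc Real.exp (-t * ((m : ℝ) * ε)) * mgf X (volume : Measure (Fin m → T)) t
      ≤ Real.exp (-t * ((m : ℝ) * ε)) * Real.exp ((m : ℝ) * ((t * M) ^ 2 / 2)) := by
        exact mul_le_mul_of_nonneg_left hmgf (Real.exp_pos _).le
  _ = Real.exp (-(m : ℝ) * ε ^ 2 / (2 * M ^ 2)) := by
        rw [← Real.exp_add]
        congr 1
        rw [ht]
        field_simp
        ring

end Chernoff

section Blocks

variable {Ω 𝒵 : Type*} [MeasurableSpace Ω] [MeasurableSpace 𝒵]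

/-- A single block of length `a` starting at time `c`. -/
def blkOne (Z : ℤ → Ω → 𝒵) (a : ℕ) (c : ℤ) : Ω → (Fin a → 𝒵) :=
  fun ω r => Z (c + ((r : ℕ) : ℤ)) ω

/-- `m` blocks of length `a`, starting at time `c`, spaced `2a` apart. -/
def blkW (Z : ℤ → Ω → 𝒵) (a : ℕ) (c : ℤ) (m : ℕ) : Ω → (Fin m → Fin a → 𝒵) :=
  fun ω i r => Z (c + ((2 * (i : ℕ) * a + (r : ℕ) : ℕ) : ℤ)) ω

lemma measurable_blkOne (Z : ℤ → Ω → 𝒵) (hZmeas : ∀ t, Measurable (Z t)) (a : ℕ) (c : ℤ) :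
    Measurable (blkOne Z a c) :=
  measurable_pi_lambda _ fun _ => hZmeas _

lemma measurable_blkW (Z : ℤ → Ω → 𝒵) (hZmeas : ∀ t, Measurable (Z t)) (a : ℕ) (c : ℤ)
    (m : ℕ) : Measurable (blkW Z a c m) :=
  measurable_pi_lambda _ fun _ => measurable_pi_lambda _ fun _ => hZmeas _

variable (P : Measure Ω) [IsProbabilityMeasure P] (Z : ℤ → Ω → 𝒵)

lemma blk_law (hZmeas : ∀ t, Measurable (Z t)) (hstat : Stationary P Z) (a : ℕ) (c : ℤ) :
    P.map (blkOne Z a c) = P.map (blkOne Z a 1) := by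
  have hΦ : Measurable (fun g : ℤ → 𝒵 => fun r : Fin a => g (1 + ((r : ℕ) : ℤ))) :=
    measurable_pi_lambda _ fun r => measurable_pi_apply _
  have h1 := congrArg (Measure.map (fun g : ℤ → 𝒵 => fun r : Fin a => g (1 + ((r : ℕ) : ℤ))))
    (hstat (c - 1))
  rw [Measure.map_map hΦ (measurable_pi_lambda _ fun t => hZmeas _),
    Measure.map_map hΦ (measurable_pi_lambda _ fun t => hZmeas _)] at h1
  have e1 : ((fun g : ℤ → 𝒵 => fun r : Fin a => g (1 + ((r : ℕ) : ℤ))) ∘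
      (fun ω => fun t : ℤ => Z (t + (c - 1)) ω)) = blkOne Z a c := by
    funext ω r
    show Z ((1 + ((r : ℕ) : ℤ)) + (c - 1)) ω = Z (c + ((r : ℕ) : ℤ)) ω
    congr 1
    ring
  have e2 : ((fun g : ℤ → 𝒵 => fun r : Fin a => g (1 + ((r : ℕ) : ℤ))) ∘
      (fun ω => fun t : ℤ => Z t ω)) = blkOne Z a 1 := rfl
  rw [e1, e2] at h1
  exact h1

lemma Z_law (hZmeas : ∀ t, Measurable (Z t)) (hstat : Stationary P Z) (t : ℤ) :
    P.map (Z t) = P.map (Z 1) := by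
  have hΦ : Measurable (fun g : ℤ → 𝒵 => g 1) := measurable_pi_apply _
  have h1 := congrArg (Measure.map (fun g : ℤ → 𝒵 => g 1)) (hstat (t - 1))
  rw [Measure.map_map hΦ (measurable_pi_lambda _ fun u => hZmeas _),
    Measure.map_map hΦ (measurable_pi_lambda _ fun u => hZmeas _)] at h1
  have e1 : ((fun g : ℤ → 𝒵 => g 1) ∘ (fun ω => fun u : ℤ => Z (u + (t - 1)) ω)) = Z t := by
    funext ω
    show Z (1 + (t - 1)) ω = Z t ω
    congr 1
    ring
  have e2 : ((fun g : ℤ → 𝒵 => g 1) ∘ (fun ω => fun u : ℤ => Z u ω)) = Z 1 := rfl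
  rw [e1, e2] at h1
  exact h1

/-- Comparing two product measures whose second factors are close in TV. -/
lemma prod_diff_le {T U : Type*} [MeasurableSpace T] [MeasurableSpace U]
    (ρ : Measure T) [IsProbabilityMeasure ρ] (ν ν' : Measure U)
    [IsProbabilityMeasure ν] [IsProbabilityMeasure ν'] {c : ℝ} (hc : 0 ≤ c)
    (h : ∀ S : Set U, MeasurableSet S → |(ν S).toReal - (ν' S).toReal| ≤ c)
    (A : Set (T × U)) (hA : MeasurableSet A) :
    |((ρ.prod ν) A).toReal - ((ρ.prod ν') A).toReal| ≤ c := by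
  have key : ∀ (κ κ' : Measure U), IsProbabilityMeasure κ → IsProbabilityMeasure κ' →
      (∀ S : Set U, MeasurableSet S → (κ S).toReal ≤ (κ' S).toReal + c) →
      (ρ.prod κ) A ≤ (ρ.prod κ') A + ENNReal.ofReal c := by
    intro κ κ' hκ hκ' hle
    haveI := hκ; haveI := hκ'
    rw [Measure.prod_apply hA, Measure.prod_apply hA]
    calc ∫⁻ x, κ (Prod.mk x ⁻¹' A) ∂ρ
        ≤ ∫⁻ x, (κ' (Prod.mk x ⁻¹' A) + ENNReal.ofReal c) ∂ρ := by
          refine lintegral_mono fun x => ?_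
          have hS : MeasurableSet (Prod.mk x ⁻¹' A) := measurable_prodMk_left hA
          have h1 := hle _ hS
          calc κ (Prod.mk x ⁻¹' A)
              = ENNReal.ofReal ((κ (Prod.mk x ⁻¹' A)).toReal) :=
                (ENNReal.ofReal_toReal (measure_ne_top _ _)).symm
          _ ≤ ENNReal.ofReal ((κ' (Prod.mk x ⁻¹' A)).toReal + c) := ENNReal.ofReal_le_ofReal h1
          _ = ENNReal.ofReal ((κ' (Prod.mk x ⁻¹' A)).toReal) + ENNReal.ofReal c :=
                ENNReal.ofReal_add ENNReal.toReal_nonneg hc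
          _ = κ' (Prod.mk x ⁻¹' A) + ENNReal.ofReal c := by
                rw [ENNReal.ofReal_toReal (measure_ne_top _ _)]
    _ = ∫⁻ x, κ' (Prod.mk x ⁻¹' A) ∂ρ + ENNReal.ofReal c := by
          rw [lintegral_add_right _ measurable_const, lintegral_const, measure_univ, mul_one]
  have toReal_le : ∀ (x y : ENNReal), x ≠ ⊤ → y ≠ ⊤ → x ≤ y + ENNReal.ofReal c →
      x.toReal ≤ y.toReal + c := by
    intro x y hx hy hxy
    have := ENNReal.toReal_mono (by finiteness) hxy
    rwa [ENNReal.toReal_add hy ENNReal.ofReal_ne_top, ENNReal.toReal_ofReal hc] at this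
  have h1 : ∀ S : Set U, MeasurableSet S → (ν S).toReal ≤ (ν' S).toReal + c := by
    intro S hS; have := abs_le.mp (h S hS); linarith [this.2]
  have h2 : ∀ S : Set U, MeasurableSet S → (ν' S).toReal ≤ (ν S).toReal + c := by
    intro S hS; have := abs_le.mp (h S hS); linarith [this.1]
  have k1 := key ν ν' inferInstance inferInstance h1
  have k2 := key ν' ν inferInstance inferInstance h2
  rw [abs_sub_le_iff]
  exact ⟨by linarith [toReal_le _ _ (measure_ne_top _ _) (measure_ne_top _ _) k1],
    by linarith [toReal_le _ _ (measure_ne_top _ _) (measure_ne_top _ _) k2]⟩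

end Blocks

section BlockTV

variable {Ω 𝒵 : Type*} [MeasurableSpace Ω] [MeasurableSpace 𝒵]
  (P : Measure Ω) [IsProbabilityMeasure P] (Z : ℤ → Ω → 𝒵)

lemma blockTV (hZmeas : ∀ t, Measurable (Z t)) (hstat : Stationary P Z) (a : ℕ)
    (m : ℕ) (hm : 1 ≤ m) : ∀ (c : ℤ) (A : Set (Fin m → Fin a → 𝒵)), MeasurableSet A →
    |(P.map (blkW Z a c m) A).toReal
        - ((Measure.pi fun _ : Fin m => P.map (blkOne Z a 1)) A).toReal|
      ≤ ((m : ℝ) - 1) * betaMix P Z a := by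
  haveI hρprob : IsProbabilityMeasure (P.map (blkOne Z a 1)) :=
    Measure.isProbabilityMeasure_map (measurable_blkOne Z hZmeas a 1).aemeasurable
  induction m, hm using Nat.le_induction with
  | base =>
    intro c A hA
    set ρ : Measure (Fin a → 𝒵) := P.map (blkOne Z a 1) with hρ
    set u : (Fin 1 → Fin a → 𝒵) ≃ᵐ (Fin a → 𝒵) :=
      MeasurableEquiv.funUnique (Fin 1) (Fin a → 𝒵) with hu
    set A'' : Set (Fin a → 𝒵) := u.symm ⁻¹' A with hA''
    have hA''meas : MeasurableSet A'' := u.symm.measurable hA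
    have hpre : u ⁻¹' A'' = A := by
      ext x; simp [hA'']
    have hWmeas : Measurable (blkW Z a c 1) := measurable_blkW Z hZmeas a c 1
    have hcomp : (⇑u ∘ blkW Z a c 1) = blkOne Z a c := by
      funext ω r
      show blkW Z a c 1 ω default r = blkOne Z a c ω r
      simp only [blkW, blkOne]
      congr 2
      simp
    have h1 : P.map (blkW Z a c 1) A = ρ A'' := by
      rw [Measure.map_apply hWmeas hA, ← hpre, ← Set.preimage_comp, hcomp,
        ← Measure.map_apply (measurable_blkOne Z hZmeas a c) hA''meas,
        blk_law P Z hZmeas hstat a c]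
    have h2 : (Measure.pi fun _ : Fin 1 => ρ) A = ρ A'' := by
      have hmpe := (measurePreserving_funUnique ρ (Fin 1)).map_eq
      calc (Measure.pi fun _ : Fin 1 => ρ) A = (Measure.pi fun _ : Fin 1 => ρ) (u ⁻¹' A'') := by
            rw [hpre]
      _ = ((Measure.pi fun _ : Fin 1 => ρ).map u) A'' :=
            (Measure.map_apply u.measurable hA''meas).symm
      _ = ρ A'' := by rw [hu]; exact congrFun (congrArg DFunLike.coe hmpe) A''
    rw [h1, h2]
    simp
  | succ m hm IH =>
    intro c A hA
    set ρ : Measure (Fin a → 𝒵) := P.map (blkOne Z a 1) with hρ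
    set e : (Fin (m + 1) → Fin a → 𝒵) ≃ᵐ (Fin a → 𝒵) × (Fin m → Fin a → 𝒵) :=
      MeasurableEquiv.piFinSuccAbove (fun _ => Fin a → 𝒵) 0 with he
    set A' : Set ((Fin a → 𝒵) × (Fin m → Fin a → 𝒵)) := e.symm ⁻¹' A with hA'
    have hA'meas : MeasurableSet A' := e.symm.measurable hA
    have hpre : e ⁻¹' A' = A := by
      ext x; simp [hA']
    have hW1 : Measurable (blkW Z a c (m + 1)) := measurable_blkW Z hZmeas a c (m + 1)
    set X0 := blkOne Z a c with hX0
    set Rest := blkW Z a (c + 2 * a) m with hRest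
    have hX0meas : Measurable X0 := measurable_blkOne Z hZmeas a c
    have hRestmeas : Measurable Rest := measurable_blkW Z hZmeas a (c + 2 * a) m
    have hpairmeas : Measurable (fun ω => (X0 ω, Rest ω)) := hX0meas.prodMk hRestmeas
    have hcomp : (⇑e ∘ blkW Z a c (m + 1)) = fun ω => (X0 ω, Rest ω) := by
      funext ω
      show e (blkW Z a c (m + 1) ω) = (X0 ω, Rest ω)
      have happ : e (blkW Z a c (m + 1) ω)
          = (blkW Z a c (m + 1) ω 0, fun j => blkW Z a c (m + 1) ω ((0 : Fin (m+1)).succAbove j)) := by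
        rw [he]
        rw [MeasurableEquiv.piFinSuccAbove_apply]
        rfl
      rw [happ]
      refine Prod.ext ?_ ?_
      · funext r
        show Z _ ω = Z _ ω
        congr 1
        simp [blkOne]
      · funext j r
        show Z _ ω = Z _ ω
        rw [Fin.zero_succAbove]
        simp only [blkW, Fin.val_succ]
        congr 1
        push_cast
        ring
    have hL : P.map (blkW Z a c (m + 1)) A = P.map (fun ω => (X0 ω, Rest ω)) A' := by
      rw [← hcomp, ← Measure.map_map e.measurable hW1,
        Measure.map_apply e.measurable hA'meas, hpre]
    have hRpi : (Measure.pi fun _ : Fin (m + 1) => ρ) A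
        = (ρ.prod (Measure.pi fun _ : Fin m => ρ)) A' := by
      have hmp := measurePreserving_piFinSuccAbove (fun _ : Fin (m + 1) => ρ) 0
      rw [← hmp.map_eq, Measure.map_apply e.measurable hA'meas, hpre]
    rw [hL, hRpi]
    set νR : Measure (Fin m → Fin a → 𝒵) := P.map Rest with hνR
    haveI : IsProbabilityMeasure νR := Measure.isProbabilityMeasure_map hRestmeas.aemeasurable
    haveI : IsProbabilityMeasure (P.map (fun ω => (X0 ω, Rest ω))) :=
      Measure.isProbabilityMeasure_map hpairmeas.aemeasurable
    -- term 1 : β-mixing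
    have hterm1 : |(P.map (fun ω => (X0 ω, Rest ω)) A').toReal - ((ρ.prod νR) A').toReal|
        ≤ betaMix P Z a := by
      set t : ℤ := c + a - 1 with htdef
      have hGmem : ∀ r : Fin a, c + ((r : ℕ) : ℤ) ≤ t := by
        intro r
        have hr := r.isLt
        omega
      have hHmem : ∀ k : ℕ, t + (a : ℤ) ≤ (c + 2 * a) + (k : ℤ) := by
        intro k
        omega
      set G : ({s : ℤ // s ≤ t} → 𝒵) → (Fin a → 𝒵) := fun g r => g ⟨c + ((r : ℕ) : ℤ), hGmem r⟩ with hG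
      set H : ({s : ℤ // t + (a : ℕ) ≤ s} → 𝒵) → (Fin m → Fin a → 𝒵) :=
        fun g i r => g ⟨(c + 2 * a) + ((2 * (i : ℕ) * a + (r : ℕ) : ℕ) : ℤ), hHmem _⟩ with hH
      have hGmeas : Measurable G := measurable_pi_lambda _ fun r => measurable_pi_apply _
      have hHmeas : Measurable H :=
        measurable_pi_lambda _ fun i => measurable_pi_lambda _ fun r => measurable_pi_apply _
      have hpastmeas := measurable_past Z hZmeas t
      have hfutmeas := measurable_future Z hZmeas t a
      have hjoint : P.map (fun ω => (X0 ω, Rest ω))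
          = (P.map (fun ω => (fun s : {s : ℤ // s ≤ t} => Z s ω,
              fun s : {s : ℤ // t + (a : ℕ) ≤ s} => Z s ω))).map (Prod.map G H) := by
        rw [Measure.map_map (hGmeas.prodMap hHmeas) (hpastmeas.prodMk hfutmeas)]
        rfl
      have hmargG : (P.map (fun ω => fun s : {s : ℤ // s ≤ t} => Z s ω)).map G = ρ := by
        rw [Measure.map_map hGmeas hpastmeas]
        have : (G ∘ fun ω => fun s : {s : ℤ // s ≤ t} => Z s ω) = blkOne Z a c := rfl
        rw [this, hρ, blk_law P Z hZmeas hstat a c]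
      have hmargH : (P.map (fun ω => fun s : {s : ℤ // t + (a : ℕ) ≤ s} => Z s ω)).map H
          = νR := by
        rw [Measure.map_map hHmeas hfutmeas]
        rfl
      have hmarg : ρ.prod νR
          = ((P.map (fun ω => fun s : {s : ℤ // s ≤ t} => Z s ω)).prod
              (P.map (fun ω => fun s : {s : ℤ // t + (a : ℕ) ≤ s} => Z s ω))).map
            (Prod.map G H) := by
        rw [← Measure.map_prod_map _ _ hGmeas hHmeas, hmargG, hmargH]
      haveI : IsProbabilityMeasure (P.map (fun ω => (fun s : {s : ℤ // s ≤ t} => Z s ω,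
          fun s : {s : ℤ // t + (a : ℕ) ≤ s} => Z s ω))) :=
        Measure.isProbabilityMeasure_map ((hpastmeas.prodMk hfutmeas).aemeasurable)
      haveI : IsProbabilityMeasure (P.map (fun ω => fun s : {s : ℤ // s ≤ t} => Z s ω)) :=
        Measure.isProbabilityMeasure_map (hpastmeas.aemeasurable)
      haveI : IsProbabilityMeasure
          (P.map (fun ω => fun s : {s : ℤ // t + (a : ℕ) ≤ s} => Z s ω)) :=
        Measure.isProbabilityMeasure_map (hfutmeas.aemeasurable)
      rw [hjoint, hmarg,
        Measure.map_apply (hGmeas.prodMap hHmeas) hA'meas,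
        Measure.map_apply (hGmeas.prodMap hHmeas) hA'meas]
      exact le_trans (abs_sub_le_tvDist _ _ ((hGmeas.prodMap hHmeas) hA'meas))
        (tvDist_le_betaMix P Z hZmeas a t)
    -- term 2 : induction hypothesis via slices
    have hterm2 : |((ρ.prod νR) A').toReal
          - ((ρ.prod (Measure.pi fun _ : Fin m => ρ)) A').toReal|
        ≤ ((m : ℝ) - 1) * betaMix P Z a := by
      refine prod_diff_le ρ νR _ ?_ (fun S hS => IH (c + 2 * a) S hS) A' hA'meas
      apply mul_nonneg
      · have : (1 : ℝ) ≤ (m : ℝ) := by exact_mod_cast hm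
        linarith
      · exact betaMix_nonneg P Z hZmeas a
    have htri := abs_sub_le (P.map (fun ω => (X0 ω, Rest ω)) A').toReal
      ((ρ.prod νR) A').toReal ((ρ.prod (Measure.pi fun _ : Fin m => ρ)) A').toReal
    have hcast : ((m + 1 : ℕ) : ℝ) - 1 = ((m : ℝ) - 1) + 1 := by push_cast; ring
    rw [hcast]
    calc |(P.map (fun ω => (X0 ω, Rest ω)) A').toReal
        - ((ρ.prod (Measure.pi fun _ : Fin m => ρ)) A').toReal| ≤ _ := htri
    _ ≤ betaMix P Z a + ((m : ℝ) - 1) * betaMix P Z a := add_le_add hterm1 hterm2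
    _ = (((m : ℝ) - 1) + 1) * betaMix P Z a := by ring
end BlockTV

section SumSplit

lemma sum_blocks_split (a μn : ℕ) (F : ℕ → ℝ) :
    ∑ t : Fin (2 * a * μn), F t
      = ∑ i : Fin μn, ∑ b : Fin 2, ∑ r : Fin a, F (r + a * b + 2 * a * i) := by
  classical
  have hEq : μn * 2 * a = 2 * a * μn := by ring
  let E : (Fin μn × Fin 2) × Fin a ≃ Fin (2 * a * μn) :=
    ((finProdFinEquiv.prodCongr (Equiv.refl (Fin a))).trans finProdFinEquiv).trans (finCongr hEq)
  have hval : ∀ p : (Fin μn × Fin 2) × Fin a,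
      ((E p : Fin (2 * a * μn)) : ℕ) = (p.2 : ℕ) + a * (p.1.2 : ℕ) + 2 * a * (p.1.1 : ℕ) := by
    rintro ⟨⟨i, b⟩, r⟩
    simp only [E, Equiv.trans_apply, Equiv.prodCongr_apply, Equiv.coe_refl, Prod.map,
      finCongr_apply, Fin.coe_cast, finProdFinEquiv_apply_val, id]
    ring
  have h1 : ∑ p : (Fin μn × Fin 2) × Fin a, F ((E p : Fin (2 * a * μn)) : ℕ)
      = ∑ t : Fin (2 * a * μn), F t :=
    Fintype.sum_equiv E _ _ (fun p => rfl)
  rw [← h1]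
  rw [Fintype.sum_prod_type, Fintype.sum_prod_type]
  refine Finset.sum_congr rfl fun i _ => Finset.sum_congr rfl fun b _ =>
    Finset.sum_congr rfl fun r _ => ?_
  rw [hval]

end SumSplit

set_option maxHeartbeats 2000000 in
/-- Slow-rate uniform error bound for quantized dynamical models (Theorem 2 in the
paper): with probability at least `1 - δ`, simultaneously for all `f ∈ ℱ`, the risk
`E[f (Z 1)]` is bounded by the empirical risk on `n = 2aμ` points plus
`M √(2((Bp+1)ln 2 + ln(1/δ'))/μ)`, where `δ' = δ - 2(μ-1)β(a) > 0`. -/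
theorem slow_rate_bound_quantized_dynamical
    {Ω 𝒵 : Type*} [MeasurableSpace Ω] [MeasurableSpace 𝒵]
    (P : Measure Ω) [IsProbabilityMeasure P]
    (Z : ℤ → Ω → 𝒵) (hZmeas : ∀ t, Measurable (Z t))
    (hstat : Stationary P Z)
    (a μ : ℕ) (ha : 1 ≤ a) (hμ : 1 ≤ μ)
    (n : ℕ) (hn : n = 2 * a * μ)
    (M : ℝ) (hM : 0 < M)
    (B p : ℕ) (hB : 0 < B) (hp : 0 < p)
    (ℱ : Finset (𝒵 → ℝ))
    (hFmeas : ∀ f ∈ ℱ, Measurable f)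
    (hFbdd : ∀ f ∈ ℱ, ∀ z, f z ∈ Set.Icc (0 : ℝ) M)
    (hcard : ℱ.card ≤ 2 ^ (B * p))
    (δ : ℝ) (hδ : δ ∈ Set.Ioo (0 : ℝ) 1)
    (hδ' : 0 < δ - 2 * ((μ : ℝ) - 1) * betaMix P Z a) :
    1 - δ ≤ (P {ω | ∀ f ∈ ℱ,
        ∫ ω', f (Z 1 ω') ∂P
          ≤ (1 / n) * ∑ t : Fin n, f (Z (((t : ℕ) + 1 : ℕ) : ℤ) ω)
            + M * Real.sqrt (2 * ((B * p + 1) * Real.log 2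
                + Real.log (1 / (δ - 2 * ((μ : ℝ) - 1) * betaMix P Z a))) / μ)}).toReal := by
  classical
  subst hn
  have haR : (0:ℝ) < a := by exact_mod_cast ha
  have hμR : (0:ℝ) < μ := by exact_mod_cast hμ
  have hμ1 : (1:ℝ) ≤ μ := by exact_mod_cast hμ
  set β : ℝ := betaMix P Z a with hβ
  have hβnn : 0 ≤ β := betaMix_nonneg P Z hZmeas a
  set δ' : ℝ := δ - 2 * ((μ : ℝ) - 1) * β with hδ'def
  have hδ'pos : 0 < δ' := hδ'
  have hδ'le : δ' ≤ δ := by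
    have h1 : 0 ≤ 2 * ((μ : ℝ) - 1) * β := by
      apply mul_nonneg (mul_nonneg (by norm_num) (by linarith [hμ1])) hβnn
    rw [hδ'def]; linarith
  have hδ'lt1 : δ' < 1 := lt_of_le_of_lt hδ'le hδ.2
  set L : ℝ := ((B : ℝ) * p + 1) * Real.log 2 + Real.log (1 / δ') with hLdef
  have hlog2 : (0:ℝ) < Real.log 2 := Real.log_pos (by norm_num)
  have hlogδ' : 0 ≤ Real.log (1 / δ') := by
    apply Real.log_nonneg
    rw [le_div_iff₀ hδ'pos]
    linarith
  have hLnn : 0 ≤ L := by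
    have h1 : (0:ℝ) ≤ (B : ℝ) * p + 1 := by positivity
    have := mul_nonneg h1 hlog2.le
    rw [hLdef]; linarith
  set ε : ℝ := M * Real.sqrt (2 * L / μ) with hεdef
  have hεnn : 0 ≤ ε := mul_nonneg hM.le (Real.sqrt_nonneg _)
  set ρ : Measure (Fin a → 𝒵) := P.map (blkOne Z a 1) with hρ
  haveI hρprob : IsProbabilityMeasure ρ :=
    Measure.isProbabilityMeasure_map (measurable_blkOne Z hZmeas a 1).aemeasurable
  -- block averages
  set gC : (𝒵 → ℝ) → (Fin a → 𝒵) → ℝ := fun f x => (∑ r, f (x r)) / a with hgC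
  have hgmeas : ∀ f ∈ ℱ, Measurable (gC f) := by
    intro f hf
    exact (Finset.measurable_sum _ fun r _ => (hFmeas f hf).comp (measurable_pi_apply r)).div_const _
  have hgbdd : ∀ f ∈ ℱ, ∀ x, gC f x ∈ Set.Icc (0:ℝ) M := by
    intro f hf x
    constructor
    · apply div_nonneg _ haR.le
      exact Finset.sum_nonneg fun r _ => (hFbdd f hf (x r)).1
    · rw [div_le_iff₀ haR]
      calc ∑ r, f (x r) ≤ ∑ _r : Fin a, M := Finset.sum_le_sum fun r _ => (hFbdd f hf (x r)).2
      _ = M * a := by simp [mul_comm]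
  have hintf : ∀ f ∈ ℱ, ∀ t : ℤ, Integrable (fun ω => f (Z t ω)) P := by
    intro f hf t
    refine integrable_of_bdd (C := M) ((hFmeas f hf).comp (hZmeas t)) fun ω => ?_
    rw [abs_le]
    exact ⟨by linarith [(hFbdd f hf (Z t ω)).1], (hFbdd f hf (Z t ω)).2⟩
  have hZint : ∀ f ∈ ℱ, ∀ t : ℤ, ∫ ω, f (Z t ω) ∂P = ∫ ω', f (Z 1 ω') ∂P := by
    intro f hf t
    rw [← integral_map (hZmeas t).aemeasurable (hFmeas f hf).aestronglyMeasurable,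
      Z_law P Z hZmeas hstat t,
      integral_map (hZmeas 1).aemeasurable (hFmeas f hf).aestronglyMeasurable]
  have hgint : ∀ f ∈ ℱ, ∫ y, gC f y ∂ρ = ∫ ω', f (Z 1 ω') ∂P := by
    intro f hf
    rw [hρ, integral_map (measurable_blkOne Z hZmeas a 1).aemeasurable
      (hgmeas f hf).aestronglyMeasurable]
    have : ∀ ω, gC f (blkOne Z a 1 ω) = (∑ r : Fin a, f (Z (1 + (r:ℕ)) ω)) / a := fun ω => rfl
    simp_rw [this]
    rw [integral_div, integral_finset_sum _ fun r _ => hintf f hf _]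
    have : ∀ r : Fin a, ∫ ω, f (Z (1 + (r:ℕ)) ω) ∂P = ∫ ω', f (Z 1 ω') ∂P :=
      fun r => hZint f hf _
    simp_rw [this]
    rw [Finset.sum_const, Finset.card_univ, Fintype.card_fin, nsmul_eq_mul, mul_div_assoc]
    field_simp
  -- the bad event in block space
  set Af : (𝒵 → ℝ) → Set (Fin μ → Fin a → 𝒵) := fun f =>
    {x | (μ : ℝ) * ε ≤ ∑ i, ((∫ ω', f (Z 1 ω') ∂P) - gC f (x i))} with hAf
  set A : Set (Fin μ → Fin a → 𝒵) := ⋃ f ∈ ℱ, Af f with hA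
  have hAfmeas : ∀ f ∈ ℱ, MeasurableSet (Af f) := by
    intro f hf
    exact measurableSet_le measurable_const
      (Finset.measurable_sum _ fun i _ =>
        measurable_const.sub ((hgmeas f hf).comp (measurable_pi_apply i)))
  have hAmeas : MeasurableSet A := by
    rw [hA]
    exact MeasurableSet.biUnion ℱ.countable_toSet fun f hf => hAfmeas f hf
  set Q : Measure (Fin μ → Fin a → 𝒵) := Measure.pi fun _ : Fin μ => ρ with hQ
  -- Chernoff + union bound
  have hexpL : Real.exp (-(μ:ℝ) * ε ^ 2 / (2 * M ^ 2)) = δ' / 2 ^ (B * p + 1) := by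
    have hε2 : ε ^ 2 = M ^ 2 * (2 * L / μ) := by
      rw [hεdef, mul_pow, Real.sq_sqrt (by positivity)]
    have h1 : -(μ:ℝ) * ε ^ 2 / (2 * M ^ 2) = -L := by
      rw [hε2]
      field_simp
    rw [h1, hLdef]
    have h2 : -(((B : ℝ) * p + 1) * Real.log 2 + Real.log (1 / δ'))
        = Real.log 2 * (-(((B * p + 1 : ℕ) : ℝ))) + Real.log δ' := by
      rw [one_div, Real.log_inv]
      push_cast
      ring
    rw [h2, Real.exp_add, ← Real.rpow_def_of_pos (by norm_num : (0:ℝ) < 2),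
      Real.rpow_neg (by norm_num : (0:ℝ) ≤ 2), Real.rpow_natCast, Real.exp_log hδ'pos]
    rw [div_eq_mul_inv, mul_comm]
  have hQf : ∀ f ∈ ℱ, (Q (Af f)).toReal ≤ δ' / 2 ^ (B * p + 1) := by
    intro f hf
    have hch := chernoff_block ρ μ (by omega) (gC f) (hgmeas f hf) M hM (hgbdd f hf) ε hεnn
    rw [hgint f hf] at hch
    rw [hQ, hAf]
    exact le_trans hch (le_of_eq hexpL)
  have hQA : (Q A).toReal ≤ δ' / 2 := by
    have h1 : Q A ≤ ∑ f ∈ ℱ, Q (Af f) := by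
      rw [hA]
      exact measure_biUnion_finset_le ℱ Af
    have h2 := ENNReal.toReal_mono (by
      refine (ENNReal.sum_lt_top.2 fun f hf => measure_lt_top _ _).ne) h1
    rw [ENNReal.toReal_sum (fun f hf => measure_ne_top _ _)] at h2
    have h3 : ∑ f ∈ ℱ, (Q (Af f)).toReal ≤ ∑ _f ∈ ℱ, δ' / 2 ^ (B * p + 1) :=
      Finset.sum_le_sum fun f hf => hQf f hf
    rw [Finset.sum_const, nsmul_eq_mul] at h3
    have hcardR : (ℱ.card : ℝ) ≤ 2 ^ (B * p) := by exact_mod_cast hcard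
    have h4 : (ℱ.card : ℝ) * (δ' / 2 ^ (B * p + 1)) ≤ (2:ℝ) ^ (B * p) * (δ' / 2 ^ (B * p + 1)) := by
      apply mul_le_mul_of_nonneg_right hcardR
      positivity
    have h5 : (2:ℝ) ^ (B * p) * (δ' / 2 ^ (B * p + 1)) = δ' / 2 := by
      rw [pow_succ]
      field_simp
    linarith
  -- transfer via β-mixing
  have htrans : ∀ c : ℤ, (P ((blkW Z a c μ) ⁻¹' A)).toReal ≤ δ' / 2 + ((μ:ℝ) - 1) * β := by
    intro c
    have hTV := blockTV P Z hZmeas hstat a μ hμ c A hAmeas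
    rw [Measure.map_apply (measurable_blkW Z hZmeas a c μ) hAmeas] at hTV
    have := abs_le.mp hTV
    have h1 : (P ((blkW Z a c μ) ⁻¹' A)).toReal
        ≤ (Q A).toReal + ((μ:ℝ) - 1) * β := by
      rw [hQ, hρ]
      linarith [this.2]
    linarith
  -- event inclusion
  set Gd : Set Ω := {ω | ∀ f ∈ ℱ,
      ∫ ω', f (Z 1 ω') ∂P
        ≤ (1 / (2 * a * μ : ℕ)) * ∑ t : Fin (2 * a * μ), f (Z (((t : ℕ) + 1 : ℕ) : ℤ) ω)
          + ε} with hGd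
  have hGdmeas : MeasurableSet Gd := by
    rw [hGd]
    have : {ω : Ω | ∀ f ∈ ℱ, ∫ ω', f (Z 1 ω') ∂P
        ≤ (1 / (2 * a * μ : ℕ)) * ∑ t : Fin (2 * a * μ), f (Z (((t : ℕ) + 1 : ℕ) : ℤ) ω) + ε}
        = ⋂ f ∈ ℱ, {ω : Ω | ∫ ω', f (Z 1 ω') ∂P
        ≤ (1 / (2 * a * μ : ℕ)) * ∑ t : Fin (2 * a * μ), f (Z (((t : ℕ) + 1 : ℕ) : ℤ) ω) + ε} := by
      ext ω; simp
    rw [this]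
    refine MeasurableSet.biInter ℱ.countable_toSet fun f hf => ?_
    refine measurableSet_le measurable_const ?_
    apply Measurable.add_const
    apply Measurable.const_mul
    exact Finset.measurable_sum _ fun t _ => (hFmeas f hf).comp (hZmeas _)
  have hsub : Gdᶜ ⊆ (blkW Z a 1 μ) ⁻¹' A ∪ (blkW Z a (1 + a) μ) ⁻¹' A := by
    intro ω hω
    rw [hGd] at hω
    simp only [Set.mem_compl_iff, Set.mem_setOf_eq, not_forall] at hω
    obtain ⟨f, hf, hlt⟩ := hω
    rw [not_le] at hlt
    -- split the empirical sum into odd/even blocks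
    have hS : ∑ t : Fin (2 * a * μ), f (Z (((t : ℕ) + 1 : ℕ) : ℤ) ω)
        = (a:ℝ) * (∑ i, gC f (blkW Z a 1 μ ω i)) + (a:ℝ) * (∑ i, gC f (blkW Z a (1 + a) μ ω i)) := by
      rw [sum_blocks_split a μ (fun k => f (Z ((k + 1 : ℕ) : ℤ) ω))]
      rw [Finset.mul_sum, Finset.mul_sum, ← Finset.sum_add_distrib]
      refine Finset.sum_congr rfl fun i _ => ?_
      rw [Fin.sum_univ_two]
      have hga : ∀ c : ℤ, (a:ℝ) * gC f (blkW Z a c μ ω i) = ∑ r, f (blkW Z a c μ ω i r) := by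
        intro c
        rw [hgC]
        rw [mul_div_cancel₀ _ (ne_of_gt haR)]
      rw [hga 1, hga (1 + a)]
      congr 1
      · refine Finset.sum_congr rfl fun r _ => ?_
        show f (Z (((r : ℕ) + a * (0 : Fin 2) + 2 * a * i + 1 : ℕ) : ℤ) ω)
          = f (Z ((1 : ℤ) + ((2 * (i:ℕ) * a + (r:ℕ) : ℕ) : ℤ)) ω)
        congr 2
        push_cast [Fin.val_zero, Fin.val_one]
        ring
      · refine Finset.sum_congr rfl fun r _ => ?_
        show f (Z (((r : ℕ) + a * (1 : Fin 2) + 2 * a * i + 1 : ℕ) : ℤ) ω)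
          = f (Z (((1 : ℤ) + (a:ℕ)) + ((2 * (i:ℕ) * a + (r:ℕ) : ℕ) : ℤ)) ω)
        congr 2
        push_cast [Fin.val_zero, Fin.val_one]
        ring
    set mf : ℝ := ∫ ω', f (Z 1 ω') ∂P with hmf
    set Go : ℝ := ∑ i, gC f (blkW Z a 1 μ ω i) with hGo
    set Ge : ℝ := ∑ i, gC f (blkW Z a (1 + a) μ ω i) with hGe
    have hsum : ∀ c : ℤ, ∑ i, (mf - gC f (blkW Z a c μ ω i))
        = (μ:ℝ) * mf - ∑ i, gC f (blkW Z a c μ ω i) := by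
      intro c
      rw [Finset.sum_sub_distrib, Finset.sum_const, Finset.card_univ, Fintype.card_fin,
        nsmul_eq_mul]
    by_cases hcase : (μ:ℝ) * ε ≤ (μ:ℝ) * mf - Go
    · left
      rw [Set.mem_preimage, hA]
      refine Set.mem_biUnion hf ?_
      rw [hAf]
      show (μ : ℝ) * ε ≤ ∑ i, (mf - gC f (blkW Z a 1 μ ω i))
      rw [hsum 1]
      exact hcase
    · right
      rw [Set.mem_preimage, hA]
      refine Set.mem_biUnion hf ?_
      rw [hAf]
      show (μ : ℝ) * ε ≤ ∑ i, (mf - gC f (blkW Z a (1 + a) μ ω i))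
      rw [hsum (1 + a)]
      by_contra hcase2
      rw [not_le] at hcase hcase2
      -- derive a contradiction with hlt
      have hnR : ((2 * a * μ : ℕ) : ℝ) = 2 * (a:ℝ) * μ := by push_cast; ring
      have hSval : (1 / ((2 * a * μ : ℕ) : ℝ))
          * (∑ t : Fin (2 * a * μ), f (Z (((t : ℕ) + 1 : ℕ) : ℤ) ω)) = (Go + Ge) / (2 * μ) := by
        rw [hS, hnR]
        field_simp
      rw [hSval] at hlt
      -- hlt : (Go + Ge) / (2 * μ) + ε < mf
      have hq : 2 * (μ:ℝ) * ((Go + Ge) / (2 * (μ:ℝ))) = Go + Ge := by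
        field_simp
      have hmul := mul_lt_mul_of_pos_left hlt (by positivity : (0:ℝ) < 2 * μ)
      rw [mul_add, hq] at hmul
      linarith
  -- final probability computation
  have hU1 := htrans 1
  have hU2 := htrans (1 + a)
  have hPc : (P Gdᶜ).toReal ≤ δ := by
    have h1 : P Gdᶜ ≤ P ((blkW Z a 1 μ) ⁻¹' A) + P ((blkW Z a (1 + a) μ) ⁻¹' A) :=
      le_trans (measure_mono hsub) (measure_union_le _ _)
    have h2 := ENNReal.toReal_mono (by finiteness) h1
    rw [ENNReal.toReal_add (measure_ne_top _ _) (measure_ne_top _ _)] at h2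
    have : δ' / 2 + ((μ:ℝ) - 1) * β + (δ' / 2 + ((μ:ℝ) - 1) * β) = δ := by
      rw [hδ'def]; ring
    linarith
  have hadd : (P Gd).toReal + (P Gdᶜ).toReal = 1 := by
    rw [← ENNReal.toReal_add (measure_ne_top _ _) (measure_ne_top _ _),
      measure_add_measure_compl hGdmeas]
    simp
  have hgoal : 1 - δ ≤ (P Gd).toReal := by linarith
  exact hgoal
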